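/- Let G be a graph on n vertices with a universal vertex and connectivity k, and let r be a root with π_{t−1}(G, r) ≤ m − 4 for some m. If C is a configuration of size m on G in which some vertex has at least 4 pebbles, or two distinct vertices each have at least 2 pebbles, then C is t-fold r-solvable provided a pebble can be moved to r at cost at most 4 (which holds since the universal vertex is adjacent to r). -/

import Mathlib

open SimpleGraph

open Classical in
/-- A single pebbling step: remove two pebbles from `u` and add one to an adjacent `v`. -/
def PebStep {V : Type*} (G : SimpleGraph V) (C C' : V → ℕ) : Prop :=
  ∃ u v, G.Adj u v ∧ 2 ≤ C u ∧
    ∀ w, C' w = if w = u then C w - 2 else if w = v then C w + 1 else C w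

/-- `C` is `t`-fold `r`-solvable: some sequence of pebbling steps places `t` pebbles on `r`. -/
def Solvable {V : Type*} (G : SimpleGraph V) (C : V → ℕ) (r : V) (t : ℕ) : Prop :=
  ∃ C', Relation.ReflTransGen (PebStep G) C C' ∧ t ≤ C' r

/-- The size of a configuration: total number of pebbles. -/
def confSize {V : Type*} [Fintype V] (C : V → ℕ) : ℕ := ∑ v, C v

/-- The potential of a configuration: the number of pairwise disjoint pairs of
pebbles sitting on common vertices, `∑ v, ⌊C v / 2⌋`. -/
def potential {V : Type*} [Fintype V] (C : V → ℕ) : ℕ := ∑ v, C v / 2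

/-- Number of vertices with no pebbles. -/
noncomputable def numZeros {V : Type*} [Fintype V] (C : V → ℕ) : ℕ :=
  {v : V | C v = 0}.ncard

/-- The `t`-pebbling number of `G` with root `r`. -/
noncomputable def piT {V : Type*} [Fintype V] (G : SimpleGraph V) (r : V) (t : ℕ) : ℕ :=
  sInf {m | ∀ C : V → ℕ, m ≤ confSize C → Solvable G C r t}

/-- The `t`-pebbling number of `G`. -/
noncomputable def piTG {V : Type*} [Fintype V] (G : SimpleGraph V) (t : ℕ) : ℕ :=
  Finset.univ.sup fun r => piT G r t

/-- `G` is `k`-connected: more than `k` vertices and deleting fewer than `k`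
vertices leaves a connected graph. -/
def KConnected {V : Type*} [Fintype V] (G : SimpleGraph V) (k : ℕ) : Prop :=
  k < Fintype.card V ∧
    ∀ S : Set V, S.ncard < k → ((⊤ : G.Subgraph).deleteVerts S).coe.Connected

/-- `u` is a universal vertex: adjacent to every other vertex. -/
def IsUniversal {V : Type*} (G : SimpleGraph V) (u : V) : Prop :=
  ∀ v, v ≠ u → G.Adj u v

/-! ### Auxiliary lemmas -/

open Classical

private noncomputable def stepFn {V : Type*} (C : V → ℕ) (a b : V) : V → ℕ :=
  fun w => if w = a then C w - 2 else if w = b then C w + 1 else C w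

private lemma stepFn_fst {V : Type*} (C : V → ℕ) (a b : V) : stepFn C a b a = C a - 2 := by
  unfold stepFn; simp

private lemma stepFn_snd {V : Type*} (C : V → ℕ) {a b : V} (hba : b ≠ a) :
    stepFn C a b b = C b + 1 := by
  unfold stepFn; simp [hba]

private lemma stepFn_other {V : Type*} (C : V → ℕ) {a b w : V} (hwa : w ≠ a) (hwb : w ≠ b) :
    stepFn C a b w = C w := by
  unfold stepFn; simp [hwa, hwb]

private lemma mkStep {V : Type*} {G : SimpleGraph V} {C : V → ℕ} {a b : V}
    (hab : G.Adj a b) (h2 : 2 ≤ C a) : PebStep G C (stepFn C a b) :=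
  ⟨a, b, hab, h2, fun _ => rfl⟩

private lemma pebstep_size {V : Type*} [Fintype V] {G : SimpleGraph V} {C C' : V → ℕ}
    (h : PebStep G C C') : confSize C' + 1 = confSize C := by
  obtain ⟨a, b, hadj, h2, hupd⟩ := h
  have hab : a ≠ b := hadj.ne
  have key : ∀ w, C' w + (if w = a then 2 else 0) = C w + (if w = b then 1 else 0) := by
    intro w
    rw [hupd w]
    by_cases h1 : w = a
    · subst h1; simp [hab]; omega
    · simp only [h1, if_false]
      split_ifs <;> omega
  have hsum : ∑ w, (C' w + (if w = a then 2 else 0))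
      = ∑ w, (C w + (if w = b then 1 else 0)) :=
    Finset.sum_congr rfl fun w _ => key w
  rw [Finset.sum_add_distrib, Finset.sum_add_distrib] at hsum
  simp [Finset.sum_ite_eq'] at hsum
  unfold confSize
  omega

private lemma confSize_addOne {V : Type*} [Fintype V] (D : V → ℕ) (r : V) :
    confSize (fun w => D w + if w = r then 1 else 0) = confSize D + 1 := by
  unfold confSize
  rw [Finset.sum_add_distrib]
  simp [Finset.sum_ite_eq']

private lemma pebstep_add {V : Type*} {G : SimpleGraph V} {D D' : V → ℕ} (x : V) (a : ℕ)
    (h : PebStep G D D') :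
    PebStep G (fun w => D w + if w = x then a else 0)
      (fun w => D' w + if w = x then a else 0) := by
  obtain ⟨p, q, hadj, h2, hupd⟩ := h
  refine ⟨p, q, hadj, le_trans h2 (Nat.le_add_right _ _), fun w => ?_⟩
  dsimp only
  have h' := hupd w
  have hpq : p ≠ q := hadj.ne
  by_cases h1 : w = p
  · have h2w : 2 ≤ D w := h1 ▸ h2
    rw [if_pos h1] at h' ⊢
    split_ifs <;> omega
  · rw [if_neg h1] at h' ⊢
    by_cases hq : w = q
    · rw [if_pos hq] at h' ⊢
      split_ifs <;> omega
    · rw [if_neg hq] at h' ⊢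
      split_ifs <;> omega

private lemma rtg_add {V : Type*} {G : SimpleGraph V} {D D' : V → ℕ} (x : V) (a : ℕ)
    (h : Relation.ReflTransGen (PebStep G) D D') :
    Relation.ReflTransGen (PebStep G) (fun w => D w + if w = x then a else 0)
      (fun w => D' w + if w = x then a else 0) := by
  induction h with
  | refl => exact .refl
  | tail _ hstep ih => exact ih.tail (pebstep_add x a hstep)

private lemma rtg_size {V : Type*} [Fintype V] {G : SimpleGraph V} {C C' : V → ℕ}
    (h : Relation.ReflTransGen (PebStep G) C C') : confSize C' ≤ confSize C := by
  induction h with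
  | refl => exact le_refl _
  | tail _ hstep ih => have := pebstep_size hstep; omega

/-- Reserve one pebble at `r`. -/
private lemma reserve {V : Type*} (C : V → ℕ) (r : V) (hr : 1 ≤ C r) :
    ∃ D : V → ℕ, (fun w => D w + if w = r then 1 else 0) = C := by
  refine ⟨fun w => if w = r then C r - 1 else C w, funext fun w => ?_⟩
  by_cases h : w = r
  · subst h; simp; omega
  · simp [h]

private lemma finishCheap {V : Type*} [Fintype V] {G : SimpleGraph V} {C C₁ : V → ℕ} {r : V}
    (hchain : Relation.ReflTransGen (PebStep G) C C₁) (hr : 1 ≤ C₁ r)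
    (hsz : confSize C ≤ confSize C₁ + 3) :
    ∃ D : V → ℕ, Relation.ReflTransGen (PebStep G) C
        (fun w => D w + if w = r then 1 else 0) ∧ confSize C ≤ confSize D + 4 := by
  obtain ⟨D, hD⟩ := reserve C₁ r hr
  have hsD : confSize C₁ = confSize D + 1 := by rw [← hD, confSize_addOne]
  exact ⟨D, by rw [hD]; exact hchain, by omega⟩

/-- The cheap-move lemma: with a universal vertex, a configuration that has a vertex
with 4 pebbles or two vertices with 2 pebbles each can put one pebble on `r`
at cost at most 4. -/
private lemma cheap {V : Type*} [Fintype V] {G : SimpleGraph V} {u : V}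
    (hu : _root_.IsUniversal G u) (r : V) (C : V → ℕ)
    (hbig : (∃ v, 4 ≤ C v) ∨ (∃ v w, v ≠ w ∧ 2 ≤ C v ∧ 2 ≤ C w)) :
    ∃ D : V → ℕ, Relation.ReflTransGen (PebStep G) C
        (fun w => D w + if w = r then 1 else 0) ∧ confSize C ≤ confSize D + 4 := by
  classical
  by_cases hr : 1 ≤ C r
  · exact finishCheap .refl hr (by omega)
  have hr0 : C r = 0 := by omega
  -- helper: one-step solution when a pebbled vertex is adjacent to r
  have onestep : ∀ v : V, G.Adj v r → 2 ≤ C v →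
      ∃ D : V → ℕ, Relation.ReflTransGen (PebStep G) C
        (fun w => D w + if w = r then 1 else 0) ∧ confSize C ≤ confSize D + 4 := by
    intro v hadj h2
    have hvr : v ≠ r := hadj.ne
    have hstep := mkStep hadj h2
    have hC1r : 1 ≤ stepFn C v r r := by
      rw [stepFn_snd C (Ne.symm hvr)]; omega
    have hsz := pebstep_size (G := G) hstep
    exact finishCheap (.single hstep) hC1r (by omega)
  -- helper: route two pebbles through u (from x then y), then u → r
  have route : ∀ x y : V, x ≠ u → y ≠ u → r ≠ u → 2 ≤ C x → (x = y → 4 ≤ C x) →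
      (x ≠ y → 2 ≤ C y) →
      ∃ D : V → ℕ, Relation.ReflTransGen (PebStep G) C
        (fun w => D w + if w = r then 1 else 0) ∧ confSize C ≤ confSize D + 4 := by
    intro x y hxu hyu hru h2x h4 h2y
    have hadjxu : G.Adj x u := (hu x hxu).symm
    have hadjyu : G.Adj y u := (hu y hyu).symm
    have hadjur : G.Adj u r := hu r hru
    have hur : u ≠ r := hadjur.ne
    set C₁ := stepFn C x u with hC1
    have hstep1 : PebStep G C C₁ := mkStep hadjxu h2x
    have h2y' : 2 ≤ C₁ y := by
      by_cases hxy : x = y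
      · subst hxy
        rw [hC1, stepFn_fst]
        have := h4 rfl; omega
      · rw [hC1, stepFn_other C (Ne.symm hxy) hyu]
        exact h2y hxy
    set C₂ := stepFn C₁ y u with hC2
    have hstep2 : PebStep G C₁ C₂ := mkStep hadjyu h2y'
    have h2u : 2 ≤ C₂ u := by
      have h1 : C₁ u = C u + 1 := by
        rw [hC1, stepFn_snd C (Ne.symm hxu)]
      have h2 : C₂ u = C₁ u + 1 := by
        rw [hC2, stepFn_snd C₁ (Ne.symm hyu)]
      omega
    set C₃ := stepFn C₂ u r with hC3
    have hstep3 : PebStep G C₂ C₃ := mkStep hadjur h2u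
    have hC3r : 1 ≤ C₃ r := by
      rw [hC3, stepFn_snd C₂ hru]; omega
    have hs1 := pebstep_size (G := G) hstep1
    have hs2 := pebstep_size (G := G) hstep2
    have hs3 := pebstep_size (G := G) hstep3
    exact finishCheap (((Relation.ReflTransGen.single hstep1).tail hstep2).tail hstep3)
      hC3r (by omega)
  rcases hbig with ⟨v, h4⟩ | ⟨v, w, hvw, h2v, h2w⟩
  · have hvr : v ≠ r := by intro h; rw [h, hr0] at h4; omega
    by_cases hadj : G.Adj v r
    · exact onestep v hadj (by omega)
    · have hvu : v ≠ u := by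
        intro h; subst h
        rcases eq_or_ne r v with h' | h'
        · exact hvr h'.symm
        · exact hadj ((hu r h').symm.symm)
      have hru : r ≠ u := by
        intro h; subst h
        exact hadj (hu v hvu).symm
      exact route v v hvu hvu hru (by omega) (fun _ => h4) (fun h => absurd rfl h)
  · have hvr : v ≠ r := by intro h; rw [h, hr0] at h2v; omega
    have hwr : w ≠ r := by intro h; rw [h, hr0] at h2w; omega
    by_cases hadjv : G.Adj v r
    · exact onestep v hadjv h2v
    by_cases hadjw : G.Adj w r
    · exact onestep w hadjw h2w
    have hvu : v ≠ u := by
      intro h; subst h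
      rcases eq_or_ne r v with h' | h'
      · exact hvr h'.symm
      · exact hadjv ((hu r h').symm.symm)
    have hwu : w ≠ u := by
      intro h; subst h
      rcases eq_or_ne r w with h' | h'
      · exact hwr h'.symm
      · exact hadjw ((hu r h').symm.symm)
    have hru : r ≠ u := by
      intro h; subst h
      exact hadjv (hu v hvu).symm
    exact route v w hvu hwu hru h2v (fun h => absurd h hvw) (fun _ => h2w)

/-- Pigeonhole: a large configuration has a vertex with 4 pebbles or two with 2 each. -/
private lemma pigeonhole {V : Type*} [Fintype V] (C : V → ℕ)
    (h : Fintype.card V + 4 ≤ confSize C) :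
    (∃ v, 4 ≤ C v) ∨ (∃ v w, v ≠ w ∧ 2 ≤ C v ∧ 2 ≤ C w) := by
  classical
  by_contra hcon
  push_neg at hcon
  obtain ⟨h1, h2⟩ := hcon
  by_cases hv : ∃ v₀, 2 ≤ C v₀
  · obtain ⟨v₀, hv₀⟩ := hv
    have hbound : ∀ v ∈ Finset.univ.erase v₀, C v ≤ 1 := by
      intro v hvmem
      have hne : v ≠ v₀ := (Finset.mem_erase.mp hvmem).1
      have := h2 v₀ v (Ne.symm hne)
      omega
    have hsum : ∑ v ∈ Finset.univ.erase v₀, C v ≤ ∑ _v ∈ Finset.univ.erase v₀, 1 :=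
      Finset.sum_le_sum hbound
    have hcard : (Finset.univ.erase v₀).card = Fintype.card V - 1 := by
      rw [Finset.card_erase_of_mem (Finset.mem_univ _), Finset.card_univ]
    have htot : ∑ v ∈ Finset.univ.erase v₀, C v + C v₀ = confSize C :=
      Finset.sum_erase_add _ _ (Finset.mem_univ _)
    have h3 : C v₀ < 4 := h1 v₀
    have hpos : 1 ≤ Fintype.card V := Fintype.card_pos_iff.mpr ⟨v₀⟩
    simp only [Finset.sum_const, smul_eq_mul, mul_one] at hsum
    omega
  · push_neg at hv
    have : confSize C ≤ ∑ _v : V, 1 := Finset.sum_le_sum fun v _ => by have := hv v; omega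
    simp [Finset.card_univ] at this
    omega

/-- Upper bound showing the defining set of `piT` is nonempty. -/
private lemma piT_bound {V : Type*} [Fintype V] {G : SimpleGraph V} {u : V}
    (hu : _root_.IsUniversal G u) (r : V) (s : ℕ) :
    ∀ C : V → ℕ, 4 * s + Fintype.card V + 4 ≤ confSize C → Solvable G C r s := by
  induction s with
  | zero => exact fun C _ => ⟨C, .refl, Nat.zero_le _⟩
  | succ s ih =>
    intro C hC
    obtain ⟨D, hchain, hsz⟩ := cheap hu r C (pigeonhole C (by omega))
    obtain ⟨D', hD', hs⟩ := ih D (by omega)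
    refine ⟨fun w => D' w + if w = r then 1 else 0, hchain.trans (rtg_add r 1 hD'), ?_⟩
    simp
    omega

theorem cheap_solution_induction {V : Type*} [Fintype V] (G : SimpleGraph V)
    (u : V) (hu : _root_.IsUniversal G u) (r : V) (t m : ℕ) (ht : 1 ≤ t)
    (hpi : piT G r (t - 1) + 4 ≤ m) (C : V → ℕ) (hsize : confSize C = m)
    (hbig : (∃ v, 4 ≤ C v) ∨ (∃ v w, v ≠ w ∧ 2 ≤ C v ∧ 2 ≤ C w)) :
    Solvable G C r t := by
  have hmem : piT G r (t - 1) ∈ {m | ∀ C : V → ℕ, m ≤ confSize C → Solvable G C r (t - 1)} :=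
    Nat.sInf_mem ⟨4 * (t - 1) + Fintype.card V + 4, fun C hC => piT_bound hu r (t - 1) C hC⟩
  obtain ⟨D, hchain, hsz⟩ := cheap hu r C hbig
  have hD : Solvable G D r (t - 1) := hmem D (by omega)
  obtain ⟨D', hD', hs⟩ := hD
  refine ⟨fun w => D' w + if w = r then 1 else 0, hchain.trans (rtg_add r 1 hD'), ?_⟩
  simp
  omega
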